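/- Let k be a commutative ℚ-algebra and F₂ the free group on X₀, X₁. In the group algebra kF₂ one has the direct sum decomposition kF₂ = k ⊕ (kF₂)(X₁−1) ⊕ (kF₂)(X₀−1); consequently, setting W := k ⊕ (kF₂)(X₁−1), one has kF₂ = W ⊕ (kF₂)(X₀−1). -/

import Mathlib

set_option linter.unusedSectionVars false
set_option linter.unreachableTactic false
set_option linter.unusedTactic false
set_option maxHeartbeats 1000000


noncomputable section

open MonoidAlgebra

variable (k : Type*) [CommRing k] [Algebra ℚ k]

/-- The free group on two generators `X₀, X₁` (indexed by `false, true`). -/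
abbrev F₂ := FreeGroup Bool

/-- `X i` : the generators of `kF₂` coming from the group. -/
def X (b : Bool) : MonoidAlgebra k F₂ := MonoidAlgebra.of k F₂ (FreeGroup.of b)

/-- The left ideal `(kF₂)·(X b − 1)`, viewed as a `k`-submodule of `kF₂`:
the range of right multiplication by `X b − 1`. -/
def leftIdeal (b : Bool) : Submodule k (MonoidAlgebra k F₂) :=
  LinearMap.range (LinearMap.mulRight k (X k b - 1))

/-- The scalars `k·1 ⊆ kF₂` as a `k`-submodule. -/
def scalars : Submodule k (MonoidAlgebra k F₂) := Submodule.span k {1}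

/-- `W := k ⊕ (kF₂)(X₁ − 1)`. -/
def Wmod : Submodule k (MonoidAlgebra k F₂) := scalars k ⊔ leftIdeal k true

@[ext] structure FoxG (A : Type*) [Ring A] where
  u : Aˣ
  d : A

namespace FoxG
variable {A : Type*} [Ring A]

instance : Mul (FoxG A) := ⟨fun x y => ⟨x.u * y.u, x.d + (x.u : A) * y.d⟩⟩
instance : One (FoxG A) := ⟨⟨1, 0⟩⟩
instance : Inv (FoxG A) := ⟨fun x => ⟨x.u⁻¹, -(((x.u⁻¹ : Aˣ) : A) * x.d)⟩⟩

@[simp] lemma mul_u (x y : FoxG A) : (x * y).u = x.u * y.u := rfl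
@[simp] lemma mul_d (x y : FoxG A) : (x * y).d = x.d + (x.u : A) * y.d := rfl
@[simp] lemma one_u : (1 : FoxG A).u = 1 := rfl
@[simp] lemma one_d : (1 : FoxG A).d = 0 := rfl
@[simp] lemma inv_u (x : FoxG A) : x⁻¹.u = x.u⁻¹ := rfl
@[simp] lemma inv_d (x : FoxG A) : x⁻¹.d = -(((x.u⁻¹ : Aˣ) : A) * x.d) := rfl

instance : Group (FoxG A) where
  mul_assoc x y z := by ext <;> simp [mul_assoc, mul_add, add_assoc]
  one_mul x := by ext <;> simp
  mul_one x := by ext <;> simp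
  inv_mul_cancel x := by ext <;> simp

def uHom : FoxG A →* Aˣ where
  toFun := FoxG.u
  map_one' := rfl
  map_mul' _ _ := rfl

end FoxG

/-- The Fox-derivative group hom. -/
def Φ (b : Bool) : F₂ →* FoxG (MonoidAlgebra k F₂) :=
  FreeGroup.lift fun c =>
    ⟨(MonoidAlgebra.of k F₂).toHomUnits (FreeGroup.of c), if c = b then 1 else 0⟩

/-- The Fox derivative on group elements. -/
def foxd (b : Bool) (w : F₂) : MonoidAlgebra k F₂ := (Φ k b w).d

lemma Φ_u (b : Bool) (w : F₂) :
    (((Φ k b w).u : (MonoidAlgebra k F₂)ˣ) : MonoidAlgebra k F₂) = MonoidAlgebra.of k F₂ w := by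
  have h : FoxG.uHom.comp (Φ k b) = (MonoidAlgebra.of k F₂).toHomUnits :=
    FreeGroup.ext_hom _ _ fun c => by simp [Φ, FoxG.uHom]
  have h2 := DFunLike.congr_fun h w
  simpa [FoxG.uHom, MonoidHom.coe_toHomUnits] using congrArg Units.val h2

@[simp] lemma foxd_one (b : Bool) : foxd k b 1 = 0 := by
  simp [foxd, map_one]

lemma foxd_mul (b : Bool) (u v : F₂) :
    foxd k b (u * v) = foxd k b u + MonoidAlgebra.of k F₂ u * foxd k b v := by
  simp [foxd, map_mul, Φ_u]

@[simp] lemma foxd_of (b c : Bool) :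
    foxd k b (FreeGroup.of c) = if c = b then 1 else 0 := by
  simp [foxd, Φ, FreeGroup.lift_apply_of]

lemma foxd_inv (b : Bool) (w : F₂) :
    foxd k b w⁻¹ = -(MonoidAlgebra.of k F₂ w⁻¹ * foxd k b w) := by
  have h2 : (((Φ k b w).u⁻¹ : (MonoidAlgebra k F₂)ˣ) : MonoidAlgebra k F₂)
      = MonoidAlgebra.of k F₂ w⁻¹ := by
    have h3 : (Φ k b w⁻¹).u = (Φ k b w).u⁻¹ := by rw [map_inv, FoxG.inv_u]
    rw [← h3, Φ_u]
  calc foxd k b w⁻¹ = ((Φ k b w)⁻¹).d := by rw [foxd, map_inv]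
    _ = -((((Φ k b w).u⁻¹ : (MonoidAlgebra k F₂)ˣ) : MonoidAlgebra k F₂) * (Φ k b w).d) := by
          rw [FoxG.inv_d]
    _ = -(MonoidAlgebra.of k F₂ w⁻¹ * foxd k b w) := by rw [h2]; rfl

/-- Key identity: `of w = 1 + ∂₀w·(X₀−1) + ∂₁w·(X₁−1)`. -/
lemma key (w : F₂) : MonoidAlgebra.of k F₂ w =
    1 + foxd k false w * (X k false - 1) + foxd k true w * (X k true - 1) := by
  induction w using FreeGroup.induction_on with
  | C1 => simp [MonoidAlgebra.one_def]
  | of c =>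
      cases c <;> simp [X] <;> noncomm_ring
  | inv_of c ih =>
      set w := FreeGroup.of c
      have h1 : MonoidAlgebra.of k F₂ w⁻¹ * MonoidAlgebra.of k F₂ w = 1 := by
        rw [← map_mul, inv_mul_cancel, map_one]
      rw [foxd_inv, foxd_inv]
      have h3 : (1 : MonoidAlgebra k F₂)
            + -(MonoidAlgebra.of k F₂ w⁻¹ * foxd k false w) * (X k false - 1)
            + -(MonoidAlgebra.of k F₂ w⁻¹ * foxd k true w) * (X k true - 1)
          = 1 - MonoidAlgebra.of k F₂ w⁻¹ *
              ((1 + foxd k false w * (X k false - 1) + foxd k true w * (X k true - 1)) - 1) := by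
        noncomm_ring
      rw [h3, ← ih, mul_sub, h1, mul_one, sub_sub_cancel]
  | mul u v ihu ihv =>
      rw [map_mul, foxd_mul, foxd_mul, ihu, ihv]
      noncomm_ring

-- continuation: ε, D, projections
/-- Augmentation. -/
def ε : MonoidAlgebra k F₂ →ₐ[k] k := MonoidAlgebra.lift k k F₂ 1

/-- Linearized Fox derivative. -/
def D (b : Bool) : MonoidAlgebra k F₂ →ₗ[k] MonoidAlgebra k F₂ :=
  (Finsupp.linearCombination k (foxd k b)).comp (MonoidAlgebra.coeffLinearEquiv k).toLinearMap

@[simp] lemma ε_single (g : F₂) (c : k) : ε k (MonoidAlgebra.single g c) = c := by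
  simp [ε, MonoidAlgebra.lift_single]

@[simp] lemma D_single (b : Bool) (g : F₂) (c : k) :
    D k b (MonoidAlgebra.single g c) = c • foxd k b g :=
  Finsupp.linearCombination_single k (v := foxd k b) c g

lemma recon (a : MonoidAlgebra k F₂) :
    a = ε k a • 1 + D k false a * (X k false - 1) + D k true a * (X k true - 1) := by
  induction a using MonoidAlgebra.induction_linear with
  | zero => simp
  | add f g hf hg =>
      rw [map_add, map_add, map_add, add_smul, add_mul, add_mul]
      conv_lhs => rw [hf, hg]
      abel
  | single g c =>
      rw [ε_single, D_single, D_single, smul_mul_assoc, smul_mul_assoc, ← smul_add, ← smul_add]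
      have h1 : (MonoidAlgebra.single g c : MonoidAlgebra k F₂)
          = c • MonoidAlgebra.of k F₂ g := by
        simp [MonoidAlgebra.of_apply, MonoidAlgebra.smul_single']
      rw [h1, key]

lemma ε_mul (b : Bool) (a : MonoidAlgebra k F₂) : ε k (a * (X k b - 1)) = 0 := by
  have hX : ε k (X k b) = 1 := by simp [ε, X, MonoidAlgebra.lift_of]
  rw [mul_sub, mul_one, map_sub, map_mul, hX, mul_one, sub_self]

lemma D_mul (b b' : Bool) (a : MonoidAlgebra k F₂) :
    D k b (a * (X k b' - 1)) = if b' = b then a else 0 := by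
  induction a using MonoidAlgebra.induction_linear with
  | zero => simp
  | add f g hf hg =>
      rw [add_mul, map_add, hf, hg]
      split <;> simp
  | single g c =>
      have h1 : (MonoidAlgebra.single g c : MonoidAlgebra k F₂) * (X k b' - 1)
          = MonoidAlgebra.single (g * FreeGroup.of b') c - MonoidAlgebra.single g c := by
        rw [mul_sub, mul_one, X, MonoidAlgebra.of_apply, MonoidAlgebra.single_mul_single, mul_one]
      rw [h1, map_sub, D_single, D_single, foxd_mul, foxd_of]
      split <;> simp [MonoidAlgebra.of_apply, MonoidAlgebra.smul_single']
/-- Projection onto the scalars. -/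
def P0 : MonoidAlgebra k F₂ →ₗ[k] MonoidAlgebra k F₂ := (ε k).toLinearMap.smulRight 1

/-- Projection onto the left ideal `(kF₂)(X b − 1)`. -/
def P (b : Bool) : MonoidAlgebra k F₂ →ₗ[k] MonoidAlgebra k F₂ :=
  (LinearMap.mulRight k (X k b - 1)).comp (D k b)

lemma P0_apply (a : MonoidAlgebra k F₂) : P0 k a = ε k a • 1 := rfl
lemma P_apply (b : Bool) (a : MonoidAlgebra k F₂) : P k b a = D k b a * (X k b - 1) := rfl

@[simp] lemma D_one (b : Bool) : D k b (1 : MonoidAlgebra k F₂) = 0 := by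
  rw [MonoidAlgebra.one_def, D_single, foxd_one, smul_zero]

lemma P_sum (a : MonoidAlgebra k F₂) : P0 k a + P k false a + P k true a = a := by
  rw [P0_apply, P_apply, P_apply]; exact (recon k a).symm

lemma mem_P0 (a : MonoidAlgebra k F₂) : P0 k a ∈ scalars k :=
  Submodule.smul_mem _ _ (Submodule.mem_span_singleton_self 1)

lemma mem_P (b : Bool) (a : MonoidAlgebra k F₂) : P k b a ∈ leftIdeal k b :=
  ⟨D k b a, rfl⟩

lemma P0_scalars {x : MonoidAlgebra k F₂} (hx : x ∈ scalars k) : P0 k x = x := by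
  obtain ⟨r, rfl⟩ := Submodule.mem_span_singleton.1 hx
  rw [P0_apply, map_smul, map_one, smul_assoc, one_smul]

lemma P_scalars (b : Bool) {x : MonoidAlgebra k F₂} (hx : x ∈ scalars k) : P k b x = 0 := by
  obtain ⟨r, rfl⟩ := Submodule.mem_span_singleton.1 hx
  rw [P_apply, map_smul, D_one, smul_zero, zero_mul]

lemma P0_leftIdeal (b : Bool) {x : MonoidAlgebra k F₂} (hx : x ∈ leftIdeal k b) :
    P0 k x = 0 := by
  obtain ⟨a, rfl⟩ := hx
  rw [LinearMap.mulRight_apply, P0_apply, ε_mul, zero_smul]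

lemma P_leftIdeal_same (b : Bool) {x : MonoidAlgebra k F₂} (hx : x ∈ leftIdeal k b) :
    P k b x = x := by
  obtain ⟨a, rfl⟩ := hx
  rw [LinearMap.mulRight_apply, P_apply, D_mul, if_pos rfl]

lemma P_leftIdeal_ne {b b' : Bool} (h : b' ≠ b) {x : MonoidAlgebra k F₂}
    (hx : x ∈ leftIdeal k b') : P k b x = 0 := by
  obtain ⟨a, rfl⟩ := hx
  rw [LinearMap.mulRight_apply, P_apply, D_mul, if_neg h, zero_mul]


/-- `kF₂ = k ⊕ (kF₂)(X₁−1) ⊕ (kF₂)(X₀−1)` as `k`-modules, and consequently,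
with `W := k ⊕ (kF₂)(X₁−1)`, one has `kF₂ = W ⊕ (kF₂)(X₀−1)`. -/
theorem monoidAlgebra_directSum_decomposition :
    DirectSum.IsInternal
      (fun i : Fin 3 =>
        match i with
        | 0 => scalars k
        | 1 => leftIdeal k true
        | 2 => leftIdeal k false) ∧
    IsCompl (Wmod k) (leftIdeal k false) := by
  set S : Fin 3 → Submodule k (MonoidAlgebra k F₂) := fun i =>
    match i with
    | 0 => scalars k
    | 1 => leftIdeal k true
    | 2 => leftIdeal k false with hS
  set Q : Fin 3 → (MonoidAlgebra k F₂ →ₗ[k] MonoidAlgebra k F₂) :=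
    ![P0 k, P k true, P k false] with hQ
  have hQ_self : ∀ i : Fin 3, ∀ x ∈ S i, Q i x = x := by
    intro i
    fin_cases i
    · exact fun x hx => P0_scalars k hx
    · exact fun x hx => P_leftIdeal_same k true hx
    · exact fun x hx => P_leftIdeal_same k false hx
  have hQ_ne : ∀ i j : Fin 3, j ≠ i → ∀ x ∈ S j, Q i x = 0 := by
    intro i j hij
    fin_cases i <;> fin_cases j <;>
      first
        | exact absurd rfl hij
        | exact fun x hx => P0_leftIdeal k _ hx
        | exact fun x hx => P_scalars k _ hx
        | exact fun x hx => P_leftIdeal_ne k (by decide) hx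
  have htop : ⨆ i, S i = ⊤ := by
    rw [eq_top_iff]
    rintro a -
    rw [← P_sum k a]
    refine Submodule.add_mem _ (Submodule.add_mem _ ?_ ?_) ?_
    · exact Submodule.mem_iSup_of_mem 0 (mem_P0 k a)
    · exact Submodule.mem_iSup_of_mem 2 (mem_P k false a)
    · exact Submodule.mem_iSup_of_mem 1 (mem_P k true a)
  have hind : iSupIndep S := by
    intro i
    rw [Submodule.disjoint_def]
    intro x hxi hxsup
    have hle : (⨆ j, ⨆ _ : j ≠ i, S j) ≤ LinearMap.ker (Q i) :=
      iSup_le fun j => iSup_le fun hj x hx => hQ_ne i j hj x hx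
    have h0 : Q i x = 0 := hle hxsup
    rw [← hQ_self i x hxi, h0]
  refine ⟨DirectSum.isInternal_submodule_of_iSupIndep_of_iSup_eq_top hind htop, ?_, ?_⟩
  · -- Disjoint Wmod (leftIdeal false)
    rw [Submodule.disjoint_def]
    intro x hxW hxf
    have hle : Wmod k ≤ LinearMap.ker (P k false) := by
      refine sup_le ?_ ?_
      · intro y hy; exact P_scalars k false hy
      · intro y hy; exact P_leftIdeal_ne k (by decide) hy
    have h0 : P k false x = 0 := hle hxW
    rw [← P_leftIdeal_same k false hxf, h0]
  · -- Codisjoint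
    rw [codisjoint_iff, eq_top_iff]
    rintro a -
    rw [← P_sum k a]
    refine Submodule.add_mem _ (Submodule.add_mem _ ?_ ?_) ?_
    · exact Submodule.mem_sup_left (Submodule.mem_sup_left (mem_P0 k a))
    · exact Submodule.mem_sup_right (mem_P k false a)
    · exact Submodule.mem_sup_left (Submodule.mem_sup_right (mem_P k true a))

end
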